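/- Let E be a real inner product space, μ > 0 and x ∈ E. Then ⨅_{z ∈ E} ( ‖z‖ + ‖z − x‖²/(2μ) ) = ‖x‖²/(2μ) if ‖x‖ ≤ μ, and = ‖x‖ − μ/2 if ‖x‖ > μ. That is, the Moreau envelope of the norm is the Huber function H_μ(x) := if ‖x‖ ≤ μ then ‖x‖²/(2μ) else ‖x‖ − μ/2. -/
import Mathlib


/-- **Moreau envelope of the norm is the Huber function.** For a real inner product
space `E`, `μ > 0` and `x ∈ E`,
`⨅_z (‖z‖ + ‖z - x‖²/(2μ)) = ‖x‖²/(2μ)` if `‖x‖ ≤ μ`, and `= ‖x‖ − μ/2` otherwise. -/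
theorem moreau_envelope_norm_eq_huber
    {E : Type*} [NormedAddCommGroup E] [InnerProductSpace ℝ E]
    (μ : ℝ) (hμ : 0 < μ) (x : E) :
    (⨅ z : E, (‖z‖ + ‖z - x‖ ^ 2 / (2 * μ))) =
      if ‖x‖ ≤ μ then ‖x‖ ^ 2 / (2 * μ) else ‖x‖ - μ / 2 := by
  have hbdd : BddBelow (Set.range fun z : E => ‖z‖ + ‖z - x‖ ^ 2 / (2 * μ)) := by
    refine ⟨0, ?_⟩
    rintro _ ⟨z, rfl⟩
    positivity
  apply le_antisymm
  · split_ifs with h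
    · calc (⨅ z : E, (‖z‖ + ‖z - x‖ ^ 2 / (2 * μ)))
          ≤ ‖(0 : E)‖ + ‖(0 : E) - x‖ ^ 2 / (2 * μ) := ciInf_le hbdd 0
        _ = ‖x‖ ^ 2 / (2 * μ) := by simp
    · push_neg at h
      have hx : (0 : ℝ) < ‖x‖ := lt_trans hμ h
      have h1 : ‖(1 - μ / ‖x‖) • x‖ = ‖x‖ - μ := by
        rw [norm_smul, Real.norm_eq_abs, abs_of_nonneg, sub_mul, one_mul,
          div_mul_cancel₀ _ hx.ne']
        rw [sub_nonneg, div_le_one hx]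
        exact h.le
      have h2 : ‖(1 - μ / ‖x‖) • x - x‖ = μ := by
        have he : (1 - μ / ‖x‖) • x - x = (-(μ / ‖x‖)) • x := by
          rw [sub_smul, one_smul, neg_smul]; abel
        rw [he, norm_smul, Real.norm_eq_abs, abs_neg,
          abs_of_nonneg (by positivity), div_mul_cancel₀ _ hx.ne']
      calc (⨅ z : E, (‖z‖ + ‖z - x‖ ^ 2 / (2 * μ)))
          ≤ ‖(1 - μ / ‖x‖) • x‖ + ‖(1 - μ / ‖x‖) • x - x‖ ^ 2 / (2 * μ) :=
            ciInf_le hbdd _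
        _ = ‖x‖ - μ / 2 := by rw [h1, h2]; field_simp; ring
  · apply le_ciInf
    intro z
    have h1 : ‖x‖ - ‖z‖ ≤ ‖z - x‖ := by
      have h := norm_sub_norm_le x z
      rw [← norm_neg (x - z), neg_sub] at h
      linarith
    have hz : (0 : ℝ) ≤ ‖z‖ := norm_nonneg z
    have hs : (0 : ℝ) ≤ ‖z - x‖ := norm_nonneg _
    split_ifs with h
    · rcases le_or_gt ‖z‖ ‖x‖ with hc | hc
      · have hsq : (‖x‖ - ‖z‖) ^ 2 ≤ ‖z - x‖ ^ 2 := by nlinarith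
        rw [div_le_iff₀ (by positivity : (0:ℝ) < 2 * μ), add_mul,
          div_mul_cancel₀ _ (by positivity : (2*μ:ℝ) ≠ 0)]
        nlinarith
      · have hx2 : ‖x‖ ^ 2 / (2 * μ) ≤ ‖x‖ := by
          rw [div_le_iff₀ (by positivity : (0:ℝ) < 2 * μ)]
          nlinarith [norm_nonneg x]
        have : (0:ℝ) ≤ ‖z - x‖ ^ 2 / (2 * μ) := by positivity
        linarith
    · push_neg at h
      rcases le_or_gt (‖x‖ - μ / 2) ‖z‖ with hc | hc
      · have : (0:ℝ) ≤ ‖z - x‖ ^ 2 / (2 * μ) := by positivity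
        linarith
      · have hsq : (‖x‖ - ‖z‖) ^ 2 ≤ ‖z - x‖ ^ 2 := by nlinarith
        rw [← sub_le_iff_le_add', le_div_iff₀ (by positivity : (0:ℝ) < 2 * μ)]
        nlinarith [sq_nonneg (‖x‖ - ‖z‖ - μ)]
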